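/- Fix an integer ℓ ≥ 3 and let (G,c) be an edge-minimal edge-colored graph with no rainbow ℓ-cycle. Fix a vertex v and X ⊆ N(v), let C_rep be the set of colors c({v,x}) that appear on at least two edges {v,x} with x ∈ X, and let y be a vertex admitting an (ℓ−1)-vertex rainbow path from v to y in G whose edges avoid all colors in C_rep. Then the number of colors that X-separate y from v is at most 3ℓ. -/

import Mathlib

open Finset

variable {V : Type*}

/-- Number of distinct colors on edges incident to `v`. -/
noncomputable def colorDeg (G : SimpleGraph V) (c : Sym2 V → ℕ) (v : V) : ℕ :=
  Set.ncard {α : ℕ | ∃ u, G.Adj u v ∧ c s(u, v) = α}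

/-- Number of distinct colors `c({u,v})` over `u ∈ N(v) ∩ U`. -/
noncomputable def colorDegOn (G : SimpleGraph V) (c : Sym2 V → ℕ) (v : V) (U : Set V) : ℕ :=
  Set.ncard {α : ℕ | ∃ u ∈ U, G.Adj u v ∧ c s(u, v) = α}

/-- Minimum color-degree `δ^c(G)`. -/
noncomputable def minColorDeg (G : SimpleGraph V) (c : Sym2 V → ℕ) : ℕ :=
  ⨅ v : V, colorDeg G c v

/-- `(G,c)` is edge-minimal: no proper spanning subgraph has the same minimum color-degree. -/
def EdgeMinimal (G : SimpleGraph V) (c : Sym2 V → ℕ) : Prop :=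
  ∀ H : SimpleGraph V, H ≤ G → H ≠ G → minColorDeg H c ≠ minColorDeg G c

/-- `(G,c)` contains a rainbow cycle on `ℓ` vertices. -/
def HasRainbowCycle (G : SimpleGraph V) (c : Sym2 V → ℕ) (ℓ : ℕ) : Prop :=
  ∃ (u : V) (p : G.Walk u u), p.IsCycle ∧ p.length = ℓ ∧ (p.edges.map c).Nodup

/-- There is a rainbow path from `v` to `y` on `k` vertices whose edge colors avoid `C`. -/
def RainbowPathAvoiding (G : SimpleGraph V) (c : Sym2 V → ℕ) (v y : V) (k : ℕ)
    (C : Set ℕ) : Prop :=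
  ∃ p : G.Walk v y, p.IsPath ∧ p.length + 1 = k ∧ (p.edges.map c).Nodup ∧
    ∀ e ∈ p.edges, c e ∉ C

/-- `σ_{v,X}(y)`: the number of colors `X`-separating `y` from `v`. -/
noncomputable def sepCount (G : SimpleGraph V) (c : Sym2 V → ℕ) (v : V) (X : Set V)
    (y : V) : ℕ :=
  Set.ncard {α : ℕ | ∃ x ∈ X, G.Adj x y ∧ c s(x, y) = α ∧ c s(v, x) ≠ α}

/-- `ρ_{v,X}(y)`: the number of colors restricted for `y` by `(v,X)`. -/
noncomputable def restrCount (G : SimpleGraph V) (c : Sym2 V → ℕ) (v : V) (X : Set V)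
    (y : V) : ℕ :=
  Set.ncard {α : ℕ | (∃ x ∈ X, G.Adj x y ∧ c s(x, y) = α ∧ c s(v, x) ≠ α) ∧
    ∀ w, G.Adj w y → w ∉ X → c s(w, y) ≠ α}

/-- The replication number `R(G,c) = max_{v,α} |N_α(v)|`. -/
noncomputable def repNum (G : SimpleGraph V) (c : Sym2 V → ℕ) : ℕ :=
  ⨆ v : V, ⨆ α : ℕ, Set.ncard {u : V | G.Adj u v ∧ c s(u, v) = α}

/-- `N_!(v)`: neighbors `u` of `v` whose color `c({u,v})` appears on exactly one edge at `v`. -/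
def bangNbhd (G : SimpleGraph V) (c : Sym2 V → ℕ) (v : V) : Set V :=
  {u : V | G.Adj u v ∧ Set.ncard {w : V | G.Adj w v ∧ c s(w, v) = c s(u, v)} = 1}

theorem stmt5 (ℓ : ℕ) (hl : 3 ≤ ℓ) [Fintype V] (G : SimpleGraph V) (c : Sym2 V → ℕ)
    (hmin : EdgeMinimal G c) (hno : ¬ HasRainbowCycle G c ℓ)
    (v y : V) (X : Set V) (hX : X ⊆ G.neighborSet v)
    (hpath : RainbowPathAvoiding G c v y (ℓ - 1)
      {α : ℕ | 1 < Set.ncard {x ∈ X | c s(v, x) = α}}) :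
    sepCount G c v X y ≤ 3 * ℓ := by
  classical
  obtain ⟨p, hp, hlen, hrb, havoid⟩ := hpath
  have hplen : p.length + 1 = ℓ - 1 := hlen
  have hvy : v ≠ y := by
    rintro rfl
    have := (SimpleGraph.Walk.isPath_iff_eq_nil (p := p)).mp hp
    subst this
    simp only [SimpleGraph.Walk.length_nil] at hplen
    omega
  set A : Finset ℕ := (p.edges.map c).toFinset with hAdef
  set B : Finset ℕ := (p.support.map fun z => c s(z, y)).toFinset with hBdef
  set D : Set V := {x | x ∈ X ∧ c s(v, x) ∈ A} with hDdef
  set D' : Set ℕ := (fun x => c s(x, y)) '' D with hD'def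
  have hmemA : ∀ β : ℕ, β ∈ A ↔ β ∈ p.edges.map c := by
    intro β; simp [hAdef]
  -- colors in A appear at most once among edges from v to X
  have hAonce : ∀ β ∈ A, Set.ncard {x ∈ X | c s(v, x) = β} ≤ 1 := by
    intro β hβ
    rw [hmemA, List.mem_map] at hβ
    obtain ⟨e, he, rfl⟩ := hβ
    have := havoid e he
    simp only [Set.mem_setOf_eq, not_lt] at this
    exact this
  -- injectivity of x ↦ c s(v,x) on D
  have hinj : Set.InjOn (fun x => c s(v, x)) D := by
    intro x1 h1 x2 h2 heq
    simp only at heq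
    have hcard := hAonce (c s(v, x1)) h1.2
    have hm1 : x1 ∈ {x ∈ X | c s(v, x) = c s(v, x1)} := ⟨h1.1, rfl⟩
    have hm2 : x2 ∈ {x ∈ X | c s(v, x) = c s(v, x1)} := ⟨h2.1, heq.symm⟩
    exact ((Set.ncard_le_one_iff (Set.toFinite _)).mp hcard hm2 hm1).symm
  -- main subset claim
  have hsub : {α : ℕ | ∃ x ∈ X, G.Adj x y ∧ c s(x, y) = α ∧ c s(v, x) ≠ α} ⊆
      (↑A ∪ ↑B) ∪ D' := by
    rintro α ⟨x, hxX, hadj, hcxy, hne⟩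
    by_cases hA : α ∈ A
    · exact Or.inl (Or.inl hA)
    by_cases hxs : x ∈ p.support
    · refine Or.inl (Or.inr ?_)
      simp only [hBdef, Finset.coe_insert, List.coe_toFinset, Set.mem_setOf_eq,
        List.mem_map]
      exact ⟨x, hxs, hcxy⟩
    by_cases hvx : c s(v, x) ∈ A
    · exact Or.inr ⟨x, ⟨hxX, hvx⟩, hcxy⟩
    -- otherwise we build a rainbow ℓ-cycle, contradiction
    exfalso
    apply hno
    have hyx : G.Adj y x := hadj.symm
    have hxv : G.Adj x v := (hX hxX).symm
    have hq0 : (p.concat hyx).IsPath := by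
      rw [← SimpleGraph.Walk.isPath_reverse_iff, SimpleGraph.Walk.reverse_concat]
      exact SimpleGraph.Walk.IsPath.cons hp.reverse (by simpa using hxs)
    have hxyne : x ≠ y := hadj.ne
    have hedge : s(x, v) ∉ (p.concat hyx).edges := by
      rw [SimpleGraph.Walk.edges_concat, List.concat_eq_append, List.mem_append]
      rintro (hmem | hmem)
      · apply hvx
        rw [hmemA, List.mem_map]
        exact ⟨s(x, v), hmem, by rw [Sym2.eq_swap]⟩
      · simp only [List.mem_singleton, Sym2.eq_iff] at hmem
        rcases hmem with ⟨rfl, rfl⟩ | ⟨-, rfl⟩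
        · exact hxyne rfl
        · exact hvy rfl
    have hcyc : (SimpleGraph.Walk.cons hxv (p.concat hyx)).IsCycle :=
      (SimpleGraph.Walk.cons_isCycle_iff _ _).mpr ⟨hq0, hedge⟩
    refine ⟨x, SimpleGraph.Walk.cons hxv (p.concat hyx), hcyc, ?_, ?_⟩
    · simp only [SimpleGraph.Walk.length_cons, SimpleGraph.Walk.length_concat]
      omega
    · have hyx_col : c s(y, x) = α := by rw [Sym2.eq_swap]; exact hcxy
      have hxv_col : c s(x, v) = c s(v, x) := by rw [Sym2.eq_swap]
      have hαnot : α ∉ p.edges.map c := fun h => hA ((hmemA α).mpr h)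
      have hvxnot : c s(v, x) ∉ p.edges.map c := fun h => hvx ((hmemA _).mpr h)
      simp only [SimpleGraph.Walk.edges_cons, SimpleGraph.Walk.edges_concat,
        List.concat_eq_append, List.map_cons, List.map_append, List.map_cons,
        List.map_nil, List.nodup_cons, List.mem_append, List.mem_singleton,
        List.nodup_append, List.nodup_nil, hyx_col, hxv_col]
      refine ⟨?_, hrb, ?_, ?_⟩
      · rintro (h | h)
        · exact hvxnot h
        · exact hne h
      · simp
      · intro a ha
        rintro _ rfl rfl
        exact hαnot ha
  -- cardinality bookkeeping
  have hfA : (↑A : Set ℕ).Finite := A.finite_toSet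
  have hfB : (↑B : Set ℕ).Finite := B.finite_toSet
  have hfD : D.Finite := Set.toFinite D
  have hfD' : D'.Finite := hfD.image _
  have hcardA : A.card ≤ p.length := by
    calc A.card ≤ (p.edges.map c).length := List.toFinset_card_le _
    _ = p.edges.length := List.length_map _
    _ = p.length := p.length_edges
  have hcardB : B.card ≤ p.length + 1 := by
    calc B.card ≤ (p.support.map fun z => c s(z, y)).length := List.toFinset_card_le _
    _ = p.support.length := List.length_map _
    _ = p.length + 1 := p.length_support
  have hcardD' : D'.ncard ≤ p.length := by
    calc D'.ncard ≤ D.ncard := by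
          rw [hD'def]; exact Set.ncard_image_le hfD
        _ = ((fun x => c s(v, x)) '' D).ncard := (Set.ncard_image_of_injOn hinj).symm
        _ ≤ (↑A : Set ℕ).ncard := by
          refine Set.ncard_le_ncard ?_ hfA
          rintro β ⟨x, hx, rfl⟩
          exact hx.2
        _ = A.card := Set.ncard_coe_finset A
        _ ≤ p.length := hcardA
  have hkey : sepCount G c v X y ≤ ((↑A ∪ ↑B) ∪ D' : Set ℕ).ncard :=
    Set.ncard_le_ncard hsub (((hfA.union hfB).union hfD'))
  calc sepCount G c v X y ≤ ((↑A ∪ ↑B) ∪ D' : Set ℕ).ncard := hkey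
    _ ≤ ((↑A ∪ ↑B : Set ℕ)).ncard + D'.ncard := Set.ncard_union_le _ _
    _ ≤ ((↑A : Set ℕ).ncard + (↑B : Set ℕ).ncard) + D'.ncard := by
        exact Nat.add_le_add_right (Set.ncard_union_le _ _) _
    _ ≤ (p.length + (p.length + 1)) + p.length := by
        rw [Set.ncard_coe_finset, Set.ncard_coe_finset]
        exact Nat.add_le_add (Nat.add_le_add hcardA hcardB) hcardD'
    _ ≤ 3 * ℓ := by omega
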